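/- Fix β > log 4 and define w_c(β) = arccosh(e^β/2 − 4e^{−β}) (which is well defined and nonnegative since e^β/2 − 4e^{−β} ≥ 1 for β ≥ log 4). Then c_β'''(w) > 0 for all 0 < w < w_c(β) and c_β'''(w) < 0 for all w > w_c(β); consequently c_β' is strictly convex on (0, w_c(β)) and strictly concave on (w_c(β), ∞). -/

import Mathlib

noncomputable section

/-- `c_β(t) = log[(1 + e^{−β}(e^t + e^{−t}))/(1 + 2e^{−β})]`. -/
def cBeta (β t : ℝ) : ℝ :=
  Real.log ((1 + Real.exp (-β) * (Real.exp t + Real.exp (-t))) / (1 + 2 * Real.exp (-β)))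

/-- The inverse hyperbolic cosine, `arcosh x = log (x + √(x² − 1))`
(the inverse of `cosh` on `[0, ∞)` for `x ≥ 1`). -/
def arcosh (x : ℝ) : ℝ := Real.log (x + Real.sqrt (x ^ 2 - 1))

/-- `w_c(β) = arccosh(e^β/2 − 4e^{−β})`. -/
def wCrit (β : ℝ) : ℝ := arcosh (Real.exp β / 2 - 4 * Real.exp (-β))

/-- first derivative of `cBeta` with `a = exp (-β)` -/
def gg1 (a t : ℝ) : ℝ :=
  a * (Real.exp t - Real.exp (-t)) / (1 + a * (Real.exp t + Real.exp (-t)))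

/-- second derivative -/
def gg2 (a t : ℝ) : ℝ :=
  (a * (Real.exp t + Real.exp (-t)) + 4 * a ^ 2) /
    (1 + a * (Real.exp t + Real.exp (-t))) ^ 2

/-- third derivative -/
def gg3 (a t : ℝ) : ℝ :=
  a * (Real.exp t - Real.exp (-t)) * (1 - 8 * a ^ 2 - a * (Real.exp t + Real.exp (-t))) /
    (1 + a * (Real.exp t + Real.exp (-t))) ^ 3

lemma hNpos (a t : ℝ) (ha : 0 < a) : 0 < 1 + a * (Real.exp t + Real.exp (-t)) := by
  positivity

lemma hasDerivAt_expNeg (t : ℝ) : HasDerivAt (fun t : ℝ => Real.exp (-t)) (-Real.exp (-t)) t := by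
  exact (hasDerivAt_neg t).exp.congr_deriv (by ring)

lemma hasDerivAt_N (a t : ℝ) :
    HasDerivAt (fun t => 1 + a * (Real.exp t + Real.exp (-t)))
      (a * (Real.exp t - Real.exp (-t))) t := by
  have := (((Real.hasDerivAt_exp t).add (hasDerivAt_expNeg t)).const_mul a).const_add 1
  exact this.congr_deriv (by ring)

lemma hasDerivAt_cBeta (β t : ℝ) :
    HasDerivAt (cBeta β) (gg1 (Real.exp (-β)) t) t := by
  have ha : 0 < Real.exp (-β) := Real.exp_pos _
  have hD0 : 0 < 1 + 2 * Real.exp (-β) := by positivity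
  have hfun : cBeta β = fun t =>
      Real.log (1 + Real.exp (-β) * (Real.exp t + Real.exp (-t)))
        - Real.log (1 + 2 * Real.exp (-β)) := by
    funext x
    rw [cBeta, Real.log_div (hNpos _ x ha).ne' hD0.ne']
  rw [hfun]
  exact ((hasDerivAt_N _ t).log (hNpos _ t ha).ne').sub_const _

lemma hasDerivAt_gg1 (a t : ℝ) (ha : 0 < a) : HasDerivAt (gg1 a) (gg2 a t) t := by
  have hN := hNpos a t ha
  have hnum : HasDerivAt (fun t => a * (Real.exp t - Real.exp (-t)))
      (a * (Real.exp t + Real.exp (-t))) t := by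
    have := ((Real.hasDerivAt_exp t).sub (hasDerivAt_expNeg t)).const_mul a
    exact this.congr_deriv (by ring)
  have h := hnum.div (hasDerivAt_N a t) hN.ne'
  refine h.congr_deriv (Eq.symm ?_)
  unfold gg2
  congr 1
  rw [Real.exp_neg]
  have he : Real.exp t ≠ 0 := Real.exp_ne_zero t
  field_simp
  ring

lemma hasDerivAt_gg2 (a t : ℝ) (ha : 0 < a) : HasDerivAt (gg2 a) (gg3 a t) t := by
  have hN := hNpos a t ha
  have hnum : HasDerivAt (fun t => a * (Real.exp t + Real.exp (-t)) + 4 * a ^ 2)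
      (a * (Real.exp t - Real.exp (-t))) t := by
    have := (((Real.hasDerivAt_exp t).add (hasDerivAt_expNeg t)).const_mul a).add_const
      (4 * a ^ 2)
    exact this.congr_deriv (by ring)
  have hden : HasDerivAt (fun t => (1 + a * (Real.exp t + Real.exp (-t))) ^ 2)
      (2 * (1 + a * (Real.exp t + Real.exp (-t))) * (a * (Real.exp t - Real.exp (-t)))) t := by
    have := (hasDerivAt_N a t).pow 2
    exact this.congr_deriv (by ring)
  have h := hnum.div hden (by positivity)
  refine h.congr_deriv (Eq.symm ?_)
  unfold gg3
  rw [div_eq_div_iff (by positivity) (by positivity), Real.exp_neg]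
  have he : Real.exp t ≠ 0 := Real.exp_ne_zero t
  field_simp
  ring

lemma deriv_cBeta (β : ℝ) : deriv (cBeta β) = gg1 (Real.exp (-β)) := by
  funext t; exact (hasDerivAt_cBeta β t).deriv

lemma third_deriv_cBeta (β : ℝ) : iteratedDeriv 3 (cBeta β) = gg3 (Real.exp (-β)) := by
  have ha : (0:ℝ) < Real.exp (-β) := Real.exp_pos _
  have h1 : deriv (gg1 (Real.exp (-β))) = gg2 (Real.exp (-β)) := by
    funext t; exact (hasDerivAt_gg1 _ t ha).deriv
  have h2 : deriv (gg2 (Real.exp (-β))) = gg3 (Real.exp (-β)) := by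
    funext t; exact (hasDerivAt_gg2 _ t ha).deriv
  rw [show (3:ℕ) = 2 + 1 from rfl, iteratedDeriv_succ, iteratedDeriv_succ,
    iteratedDeriv_one, deriv_cBeta, h1, h2]

lemma cosh_arcosh {x : ℝ} (hx : 1 ≤ x) :
    Real.exp (arcosh x) + Real.exp (-arcosh x) = 2 * x := by
  have hx2 : 0 ≤ x ^ 2 - 1 := by nlinarith
  set s := Real.sqrt (x ^ 2 - 1) with hs
  have hs0 : 0 ≤ s := Real.sqrt_nonneg _
  have hssq : s ^ 2 = x ^ 2 - 1 := Real.sq_sqrt hx2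
  have hy : 0 < x + s := by linarith
  have h1 : Real.exp (arcosh x) = x + s := Real.exp_log hy
  have hmul : (x + s) * (x - s) = 1 := by nlinarith
  have h2 : Real.exp (-arcosh x) = x - s := by
    rw [Real.exp_neg, h1, inv_eq_of_mul_eq_one_right hmul]
  rw [h1, h2]; ring

lemma arcosh_nonneg {x : ℝ} (hx : 1 ≤ x) : 0 ≤ arcosh x := by
  apply Real.log_nonneg
  have := Real.sqrt_nonneg (x ^ 2 - 1)
  linarith

/-- For `β > log 4`, with `w_c(β) = arccosh(e^β/2 − 4e^{−β})` (well
defined and nonnegative since `e^β/2 − 4e^{−β} ≥ 1`): `c_β'''(w) > 0` for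
`0 < w < w_c(β)` and `c_β'''(w) < 0` for `w > w_c(β)`; consequently `c_β'` is strictly
convex on `(0, w_c(β))` and strictly concave on `(w_c(β), ∞)`. -/
theorem cBeta_third_deriv_sign (β : ℝ) (hβ : Real.log 4 < β) :
    (1 ≤ Real.exp β / 2 - 4 * Real.exp (-β)) ∧ 0 ≤ wCrit β ∧
    (∀ w : ℝ, 0 < w → w < wCrit β → 0 < iteratedDeriv 3 (cBeta β) w) ∧
    (∀ w : ℝ, wCrit β < w → iteratedDeriv 3 (cBeta β) w < 0) ∧
    StrictConvexOn ℝ (Set.Ioo 0 (wCrit β)) (deriv (cBeta β)) ∧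
    StrictConcaveOn ℝ (Set.Ioi (wCrit β)) (deriv (cBeta β)) := by
  have ha : 0 < Real.exp (-β) := Real.exp_pos _
  have hE : 0 < Real.exp β := Real.exp_pos _
  have hE4 : (4:ℝ) < Real.exp β := by
    calc (4:ℝ) = Real.exp (Real.log 4) := (Real.exp_log (by norm_num)).symm
    _ < Real.exp β := Real.exp_lt_exp.mpr hβ
  have haE : Real.exp (-β) = (Real.exp β)⁻¹ := Real.exp_neg β
  have hI : (Real.exp β)⁻¹ < 4⁻¹ := by
    rw [inv_lt_inv₀ hE (by norm_num)]; exact hE4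
  have hx1 : 1 ≤ Real.exp β / 2 - 4 * Real.exp (-β) := by
    rw [haE]; linarith
  have hwc0 : 0 ≤ wCrit β := arcosh_nonneg hx1
  have hsum : Real.exp (wCrit β) + Real.exp (-wCrit β)
      = 2 * (Real.exp β / 2 - 4 * Real.exp (-β)) := cosh_arcosh hx1
  have hkey : Real.exp (-β) * (Real.exp (wCrit β) + Real.exp (-wCrit β))
      = 1 - 8 * Real.exp (-β) ^ 2 := by
    rw [hsum, haE]
    field_simp
    ring
  have h3 := third_deriv_cBeta β
  have hmono : ∀ u v : ℝ, 0 ≤ u → u < v →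
      Real.exp u + Real.exp (-u) < Real.exp v + Real.exp (-v) := by
    intro u v hu huv
    have h : Real.cosh u < Real.cosh v := by
      rw [Real.cosh_lt_cosh, abs_of_nonneg hu, abs_of_nonneg (le_trans hu huv.le)]
      exact huv
    rw [Real.cosh_eq, Real.cosh_eq] at h
    linarith
  have hpos : ∀ w : ℝ, 0 < w → w < wCrit β → 0 < iteratedDeriv 3 (cBeta β) w := by
    intro w hw hwlt
    rw [h3, gg3]
    apply div_pos
    · apply mul_pos
      · apply mul_pos ha
        have : Real.exp (-w) < Real.exp w := Real.exp_lt_exp.mpr (by linarith)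
        linarith
      · have := hmono w (wCrit β) hw.le hwlt
        nlinarith [hkey, ha]
    · positivity
  have hneg : ∀ w : ℝ, wCrit β < w → iteratedDeriv 3 (cBeta β) w < 0 := by
    intro w hwlt
    have hw : 0 < w := lt_of_le_of_lt hwc0 hwlt
    rw [h3, gg3]
    apply div_neg_of_neg_of_pos
    · apply mul_neg_of_pos_of_neg
      · apply mul_pos ha
        have : Real.exp (-w) < Real.exp w := Real.exp_lt_exp.mpr (by linarith)
        linarith
      · have := hmono (wCrit β) w hwc0 hwlt
        nlinarith [hkey, ha]
    · positivity
  have hcont : Continuous (gg1 (Real.exp (-β))) := by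
    apply Continuous.div
    · fun_prop
    · fun_prop
    · intro t; exact (hNpos _ t ha).ne'
  have hd2 : ∀ w : ℝ, deriv^[2] (deriv (cBeta β)) w = iteratedDeriv 3 (cBeta β) w := by
    intro w
    rw [iteratedDeriv_eq_iterate, show (3:ℕ) = 2 + 1 from rfl, Function.iterate_succ]
    rfl
  refine ⟨hx1, hwc0, hpos, hneg, ?_, ?_⟩
  · apply strictConvexOn_of_deriv2_pos (convex_Ioo _ _)
    · rw [deriv_cBeta]; exact hcont.continuousOn
    · intro w hw
      rw [interior_Ioo] at hw
      rw [hd2]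
      exact hpos w hw.1 hw.2
  · apply strictConcaveOn_of_deriv2_neg (convex_Ioi _)
    · rw [deriv_cBeta]; exact hcont.continuousOn
    · intro w hw
      rw [interior_Ioi] at hw
      rw [hd2]
      exact hneg w hw
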